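/- arXiv:1908.01215 — 2 statements merged into one kernel-verified Lean document; each statement's English description precedes it below -/
import Mathlib

section
/- Let B be a bicategory, W a class of 1-morphisms satisfying [WB1]–[WB5], w : A → B in W and f : C → B arbitrary. Given two squares with invertible 2-cells α₁ : w ∘ g₁ ⇒ f ∘ v₁ and α₂ : w ∘ g₂ ⇒ f ∘ v₂ (with g_i : D_i → A, v_i : D_i → C), and a morphism u : C → X in W such that u, u∘v₁ and u∘v₂ all lie in W, there exist 1-morphisms s₁ : E → D₁, s₂ : E → D₂ and invertible 2-cells β : v₁ ∘ s₁ ⇒ v₂ ∘ s₂ and γ : g₁ ∘ s₁ ⇒ g₂ ∘ s₂ such that u ∘ v₁ ∘ s₁ ∈ W and (f ∘ β) · (α₁ ∘ s₁) = (α₂ ∘ s₂) · (w ∘ γ). -/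
open CategoryTheory Bicategory

universe w v u

/-- A class of 1-morphisms in a bicategory. -/
def WClass (B : Type u) [Bicategory.{w, v} B] :=
  ∀ ⦃a b : B⦄, (a ⟶ b) → Prop

namespace WClass

variable {B : Type u} [Bicategory.{w, v} B]

/-- [WB1]: all identities are in `W`. -/
def WB1 (W : WClass B) : Prop := ∀ a : B, W (𝟙 a)

/-- [WB2]: for composable arrows of `W` there is a pre-composition landing in `W`. -/
def WB2 (W : WClass B) : Prop :=
  ∀ ⦃a b c : B⦄ (vm : a ⟶ b) (wm : b ⟶ c), W vm → W wm →
    ∃ (a' : B) (u : a' ⟶ a), W (u ≫ vm ≫ wm)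

/-- [WB3]: squares with invertible fillers over cospans with one leg in `W`. -/
def WB3 (W : WClass B) : Prop :=
  ∀ ⦃a b c : B⦄ (wm : a ⟶ b) (f : c ⟶ b), W wm →
    ∃ (d : B) (h : d ⟶ a) (vm : d ⟶ c), W vm ∧ Nonempty (h ≫ wm ≅ vm ≫ f)

/-- `β` is a lifting of the 2-cell `η : f ≫ wm ⟶ g ≫ wm` along `wm`, via `u`. -/
def IsLift ⦃a b c : B⦄ (f g : a ⟶ b) (wm : b ⟶ c) (η : f ≫ wm ⟶ g ≫ wm)
    ⦃a' : B⦄ (u : a' ⟶ a) (β : u ≫ f ⟶ u ≫ g) : Prop :=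
  β ▷ wm = (α_ u f wm).hom ≫ u ◁ η ≫ (α_ u g wm).inv

/-- [WB4]: existence of liftings of 2-cells along arrows of `W`, together with
the compatibility of any two such liftings. -/
def WB4 (W : WClass B) : Prop :=
  (∀ ⦃a b c : B⦄ (f g : a ⟶ b) (wm : b ⟶ c), W wm → ∀ η : f ≫ wm ⟶ g ≫ wm,
    ∃ (a' : B) (u : a' ⟶ a), W u ∧ ∃ β : u ≫ f ⟶ u ≫ g, IsLift f g wm η u β) ∧
  (∀ ⦃a b c : B⦄ (f g : a ⟶ b) (wm : b ⟶ c), W wm → ∀ η : f ≫ wm ⟶ g ≫ wm,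
    ∀ ⦃a₁ : B⦄ (u₁ : a₁ ⟶ a) (β₁ : u₁ ≫ f ⟶ u₁ ≫ g), W u₁ → IsLift f g wm η u₁ β₁ →
      ∀ ⦃a₂ : B⦄ (u₂ : a₂ ⟶ a) (β₂ : u₂ ≫ f ⟶ u₂ ≫ g), W u₂ → IsLift f g wm η u₂ β₂ →
        ∃ (d : B) (s : d ⟶ a₁) (t : d ⟶ a₂), W (s ≫ u₁) ∧ W (t ≫ u₂) ∧
          ∃ e : s ≫ u₁ ≅ t ≫ u₂,
            ((α_ s u₁ f).hom ≫ s ◁ β₁ ≫ (α_ s u₁ g).inv) ≫ e.hom ▷ g =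
              e.hom ▷ f ≫ (α_ t u₂ f).hom ≫ t ◁ β₂ ≫ (α_ t u₂ g).inv)

/-- [WB5]: `W` is closed under invertible 2-cells. -/
def WB5 (W : WClass B) : Prop :=
  ∀ ⦃a b : B⦄ (vm wm : a ⟶ b), W wm → Nonempty (vm ≅ wm) → W vm

end WClass

namespace WClass

variable {B : Type u} [Bicategory.{w, v} B] {W : WClass B}

theorem lift_whisker {a b c a' : B} {f g : a ⟶ b} {wm : b ⟶ c} {η : f ≫ wm ⟶ g ≫ wm}
    {u : a' ⟶ a} {β : u ≫ f ⟶ u ≫ g} (hβ : IsLift f g wm η u β) {d : B} (r : d ⟶ a') :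
    IsLift f g wm η (r ≫ u) ((α_ r u f).hom ≫ r ◁ β ≫ (α_ r u g).inv) := by
  unfold IsLift at *
  rw [comp_whiskerRight, comp_whiskerRight, whisker_assoc, hβ]
  bicategory

theorem lift_comp {a b c a' : B} {f g h : a ⟶ b} {wm : b ⟶ c} {η : f ≫ wm ⟶ g ≫ wm}
    {θ : g ≫ wm ⟶ h ≫ wm} {u : a' ⟶ a} {β : u ≫ f ⟶ u ≫ g} {β' : u ≫ g ⟶ u ≫ h}
    (hβ : IsLift f g wm η u β) (hβ' : IsLift g h wm θ u β') :
    IsLift f h wm (η ≫ θ) u (β ≫ β') := by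
  unfold IsLift at *
  rw [comp_whiskerRight, hβ, hβ']
  simp

theorem lift_id {a b c a' : B} (f : a ⟶ b) (wm : b ⟶ c) (u : a' ⟶ a) :
    IsLift f f wm (𝟙 (f ≫ wm)) u (𝟙 (u ≫ f)) := by
  unfold IsLift; simp

theorem lift_transport {a b c a' : B} {f g : a ⟶ b} {wm : b ⟶ c} {η : f ≫ wm ⟶ g ≫ wm}
    {u : a' ⟶ a} {β : u ≫ f ⟶ u ≫ g} (hβ : IsLift f g wm η u β)
    {u' : a' ⟶ a} (τ : u' ≅ u) :
    IsLift f g wm η u' (τ.hom ▷ f ≫ β ≫ τ.inv ▷ g) := by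
  unfold IsLift at *
  rw [comp_whiskerRight, comp_whiskerRight, hβ]
  rw [show τ.hom ▷ f ▷ wm = (α_ u' f wm).hom ≫ τ.hom ▷ (f ≫ wm) ≫ (α_ u f wm).inv by bicategory]
  rw [show τ.inv ▷ g ▷ wm = (α_ u g wm).hom ≫ τ.inv ▷ (g ≫ wm) ≫ (α_ u' g wm).inv by bicategory]
  simp only [Category.assoc, Iso.inv_hom_id_assoc]
  rw [← whisker_exchange_assoc]
  simp [← comp_whiskerRight]

theorem chain2 (h2 : W.WB2) (h5 : W.WB5) {a b c : B} (x : a ⟶ b) (y : b ⟶ c)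
    (hx : W x) (hy : W y) : ∃ (a' : B) (p : a' ⟶ a), W ((p ≫ x) ≫ y) := by
  obtain ⟨a', p, hp⟩ := h2 x y hx hy
  exact ⟨a', p, h5 _ _ hp ⟨α_ p x y⟩⟩

theorem whiskerLeft_comp_id {P Q R : B} {x : Q ⟶ P} {h : P ⟶ R} {c : h ⟶ h}
    (hc : x ◁ c = 𝟙 _) {e : B} (y : e ⟶ Q) : (y ≫ x) ◁ c = 𝟙 _ := by
  rw [comp_whiskerLeft, hc]; simp

theorem eq_id_of_square {d P a b : B} {s t : d ⟶ P} {v : P ⟶ a} {f : a ⟶ b}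
    (eps : s ≫ v ≅ t ≫ v) (c : v ≫ f ⟶ v ≫ f)
    (h : ((α_ s v f).hom ≫ s ◁ c ≫ (α_ s v f).inv) ≫ eps.hom ▷ f =
      eps.hom ▷ f ≫ ((α_ t v f).hom ≫ t ◁ 𝟙 (v ≫ f) ≫ (α_ t v f).inv)) :
    s ◁ c = 𝟙 _ := by
  simp only [Bicategory.whiskerLeft_id, Category.id_comp, Iso.hom_inv_id,
    Category.comp_id, Category.assoc] at h
  have h2 : (α_ s v f).hom ≫ s ◁ c ≫ (α_ s v f).inv = 𝟙 _ := by
    have h3 := congrArg (fun x => x ≫ inv (eps.hom ▷ f)) h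
    simpa [Category.assoc] using h3
  simpa using congrArg (fun x => (α_ s v f).inv ≫ x ≫ (α_ s v f).hom) h2

theorem isoLift (h2 : W.WB2) (h3 : W.WB3) (h4 : W.WB4) (h5 : W.WB5)
    {a b c : B} (f g : a ⟶ b) (wm : b ⟶ c) (hw : W wm) (η : f ≫ wm ≅ g ≫ wm) :
    ∃ (a' : B) (u : a' ⟶ a), W u ∧ ∃ β : u ≫ f ≅ u ≫ g, IsLift f g wm η.hom u β.hom := by
  obtain ⟨a₁, u₁, hWu₁, βa, hβa⟩ := h4.1 f g wm hw η.hom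
  obtain ⟨a₂, u₂, hWu₂, βb, hβb⟩ := h4.1 g f wm hw η.inv
  obtain ⟨P0, p₁, p₂, hWp₂, ⟨τ0⟩⟩ := h3 u₁ u₂ hWu₁
  obtain ⟨P, p, hWpc⟩ := chain2 h2 h5 p₂ u₂ hWp₂ hWu₂
  set q₁ : P ⟶ a₁ := p ≫ p₁ with hq₁
  set q₂ : P ⟶ a₂ := p ≫ p₂ with hq₂
  have τ : q₁ ≫ u₁ ≅ q₂ ≫ u₂ := α_ p p₁ u₁ ≪≫ whiskerLeftIso p τ0 ≪≫ (α_ p p₂ u₂).symm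
  set v : P ⟶ a := q₁ ≫ u₁ with hv
  have hWv : W v := h5 _ _ hWpc ⟨τ⟩
  set βa1 : v ≫ f ⟶ v ≫ g := (α_ q₁ u₁ f).hom ≫ q₁ ◁ βa ≫ (α_ q₁ u₁ g).inv with hβa1def
  have hβa1 : IsLift f g wm η.hom v βa1 := lift_whisker hβa q₁
  set βb2 : v ≫ g ⟶ v ≫ f :=
    τ.hom ▷ g ≫ ((α_ q₂ u₂ g).hom ≫ q₂ ◁ βb ≫ (α_ q₂ u₂ f).inv) ≫ τ.inv ▷ f with hβb2def
  have hβb2 : IsLift g f wm η.inv v βb2 := lift_transport (lift_whisker hβb q₂) τ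
  set c₁ : v ≫ f ⟶ v ≫ f := βa1 ≫ βb2 with hc₁def
  set c₂ : v ≫ g ⟶ v ≫ g := βb2 ≫ βa1 with hc₂def
  have hc₁ : IsLift f f wm (𝟙 (f ≫ wm)) v c₁ := by
    have := lift_comp hβa1 hβb2; rwa [Iso.hom_inv_id] at this
  have hc₂ : IsLift g g wm (𝟙 (g ≫ wm)) v c₂ := by
    have := lift_comp hβb2 hβa1; rwa [Iso.inv_hom_id] at this
  obtain ⟨d₁, s, t, hWsv, -, eps, heps⟩ :=
    h4.2 f f wm hw (𝟙 (f ≫ wm)) v c₁ hWv hc₁ v (𝟙 (v ≫ f)) hWv (lift_id f wm v)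
  obtain ⟨d₂, s', t', hWs'v, -, eps', heps'⟩ :=
    h4.2 g g wm hw (𝟙 (g ≫ wm)) v c₂ hWv hc₂ v (𝟙 (v ≫ g)) hWv (lift_id g wm v)
  have hsc₁ : s ◁ c₁ = 𝟙 _ := eq_id_of_square eps c₁ heps
  have hs'c₂ : s' ◁ c₂ = 𝟙 _ := eq_id_of_square eps' c₂ heps'
  obtain ⟨e, k₁, k₂, hWk₂, ⟨ι0⟩⟩ := h3 (s ≫ v) (s' ≫ v) hWsv
  obtain ⟨e₁, p', hWp'c⟩ := chain2 h2 h5 k₂ (s' ≫ v) hWk₂ hWs'v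
  set m₁ : e₁ ⟶ P := (p' ≫ k₁) ≫ s with hm₁
  set m₂ : e₁ ⟶ P := (p' ≫ k₂) ≫ s' with hm₂
  have ι : m₁ ≫ v ≅ m₂ ≫ v :=
    α_ (p' ≫ k₁) s v ≪≫ α_ p' k₁ (s ≫ v) ≪≫ whiskerLeftIso p' ι0 ≪≫
      (α_ p' k₂ (s' ≫ v)).symm ≪≫ (α_ (p' ≫ k₂) s' v).symm
  obtain ⟨e₂, z, hWz, ρ, hρ⟩ := h4.1 m₁ m₂ v hWv ι.hom
  have hρvf : IsIso (ρ ▷ v) := by rw [hρ]; infer_instance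
  have hm₁c₁ : m₁ ◁ c₁ = 𝟙 _ := whiskerLeft_comp_id hsc₁ (p' ≫ k₁)
  have hm₂c₂ : m₂ ◁ c₂ = 𝟙 _ := whiskerLeft_comp_id hs'c₂ (p' ≫ k₂)
  have hzm₁c₁ : (z ≫ m₁) ◁ c₁ = 𝟙 _ := whiskerLeft_comp_id hm₁c₁ z
  have hρvf2 : IsIso (ρ ▷ (v ≫ f)) := by
    rw [Bicategory.whiskerRight_comp]
    infer_instance
  have hzm₂c₁ : (z ≫ m₂) ◁ c₁ = 𝟙 _ := by
    have hex := whisker_exchange (η := ρ) (θ := c₁)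
    rw [hzm₁c₁, Category.id_comp] at hex
    have h0 : ρ ▷ (v ≫ f) ≫ 𝟙 _ = ρ ▷ (v ≫ f) ≫ (z ≫ m₂) ◁ c₁ := by
      rw [Category.comp_id]; exact hex
    exact ((cancel_epi (ρ ▷ (v ≫ f))).mp h0).symm
  have hWm₂v : W (m₂ ≫ v) := h5 _ _ hWp'c ⟨α_ (p' ≫ k₂) s' v⟩
  obtain ⟨e₃, p'', hWfin⟩ := chain2 h2 h5 z (m₂ ≫ v) hWz hWm₂v
  set rP : e₃ ⟶ P := p'' ≫ (z ≫ m₂) with hrP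
  have hrc₁ : rP ◁ c₁ = 𝟙 _ := whiskerLeft_comp_id hzm₂c₁ p''
  have hrc₂ : rP ◁ c₂ = 𝟙 _ := whiskerLeft_comp_id (whiskerLeft_comp_id hm₂c₂ z) p''
  refine ⟨e₃, rP ≫ v, ?_, ⟨⟨(α_ rP v f).hom ≫ rP ◁ βa1 ≫ (α_ rP v g).inv,
    (α_ rP v g).hom ≫ rP ◁ βb2 ≫ (α_ rP v f).inv, ?_, ?_⟩, ?_⟩⟩
  · exact h5 _ _ hWfin ⟨α_ p'' (z ≫ m₂) v ≪≫ whiskerLeftIso p'' (α_ z m₂ v) ≪≫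
      (α_ p'' z (m₂ ≫ v)).symm⟩
  · have key : rP ◁ βa1 ≫ rP ◁ βb2 = 𝟙 _ := by
      rw [← Bicategory.whiskerLeft_comp, ← hc₁def]; exact hrc₁
    simp only [Category.assoc, Iso.inv_hom_id_assoc]
    slice_lhs 2 3 => rw [key]
    simp
  · have key : rP ◁ βb2 ≫ rP ◁ βa1 = 𝟙 _ := by
      rw [← Bicategory.whiskerLeft_comp, ← hc₂def]; exact hrc₂
    simp only [Category.assoc, Iso.inv_hom_id_assoc]
    slice_lhs 2 3 => rw [key]
    simp
  · exact lift_whisker hβa1 rP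

end WClass

theorem assemble {B : Type u} [Bicategory.{w, v} B] {S Q₁ D₁ D₂ A' B' C' : B}
    (m : S ⟶ Q₁) (s₁'' : Q₁ ⟶ D₁) (s₂'' : Q₁ ⟶ D₂)
    (g₁ : D₁ ⟶ A') (v₁ : D₁ ⟶ C') (g₂ : D₂ ⟶ A') (v₂ : D₂ ⟶ C')
    (wm : A' ⟶ B') (f : C' ⟶ B')
    (α₁ : g₁ ≫ wm ≅ v₁ ≫ f) (α₂ : g₂ ≫ wm ≅ v₂ ≫ f)
    (βmid : s₁'' ≫ v₁ ≅ s₂'' ≫ v₂)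
    (γm : m ≫ (s₁'' ≫ g₁) ⟶ m ≫ (s₂'' ≫ g₂))
    (hγ : γm ▷ wm = (α_ m (s₁'' ≫ g₁) wm).hom ≫
       m ◁ ((α_ s₁'' g₁ wm).hom ≫ s₁'' ◁ α₁.hom ≫ (α_ s₁'' v₁ f).inv ≫ βmid.hom ▷ f ≫
            (α_ s₂'' v₂ f).hom ≫ s₂'' ◁ α₂.inv ≫ (α_ s₂'' g₂ wm).inv) ≫
       (α_ m (s₂'' ≫ g₂) wm).inv) :
    (α_ (m ≫ s₁'') g₁ wm).hom ≫ (m ≫ s₁'') ◁ α₁.hom ≫ (α_ (m ≫ s₁'') v₁ f).inv ≫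
      ((α_ m s₁'' v₁).hom ≫ m ◁ βmid.hom ≫ (α_ m s₂'' v₂).inv) ▷ f =
    ((α_ m s₁'' g₁).hom ≫ γm ≫ (α_ m s₂'' g₂).inv) ▷ wm ≫
      (α_ (m ≫ s₂'') g₂ wm).hom ≫ (m ≫ s₂'') ◁ α₂.hom ≫ (α_ (m ≫ s₂'') v₂ f).inv := by
  have key : (α_ (m ≫ s₁'') g₁ wm).hom ≫ (m ≫ s₁'') ◁ α₁.hom ≫ (α_ (m ≫ s₁'') v₁ f).inv ≫
      ((α_ m s₁'' v₁).hom ≫ m ◁ βmid.hom ≫ (α_ m s₂'' v₂).inv) ▷ f ≫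
      (α_ (m ≫ s₂'') v₂ f).hom ≫ (m ≫ s₂'') ◁ α₂.inv ≫ (α_ (m ≫ s₂'') g₂ wm).inv =
      ((α_ m s₁'' g₁).hom ≫ γm ≫ (α_ m s₂'' g₂).inv) ▷ wm := by
    conv_rhs => rw [comp_whiskerRight, comp_whiskerRight, hγ]
    bicategory
  rw [← key]
  simp only [Category.assoc, Iso.inv_hom_id_assoc, comp_whiskerRight, whisker_assoc,
    Bicategory.whiskerLeft_comp]
  simp only [whiskerLeft_inv_hom_assoc, Iso.hom_inv_id, Category.comp_id]


theorem statement4 {B : Type u} [Bicategory.{w, v} B] (W : WClass B)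
    (h1 : W.WB1) (h2 : W.WB2) (h3 : W.WB3) (h4 : W.WB4) (h5 : W.WB5)
    {A' B' C' X D₁ D₂ : B} (wm : A' ⟶ B') (hwm : W wm) (f : C' ⟶ B')
    (g₁ : D₁ ⟶ A') (v₁ : D₁ ⟶ C') (g₂ : D₂ ⟶ A') (v₂ : D₂ ⟶ C')
    (α₁ : g₁ ≫ wm ≅ v₁ ≫ f) (α₂ : g₂ ≫ wm ≅ v₂ ≫ f)
    (u : C' ⟶ X) (hu : W u) (hu₁ : W (v₁ ≫ u)) (hu₂ : W (v₂ ≫ u)) :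
    ∃ (E : B) (s₁ : E ⟶ D₁) (s₂ : E ⟶ D₂)
      (β : s₁ ≫ v₁ ≅ s₂ ≫ v₂) (γ : s₁ ≫ g₁ ≅ s₂ ≫ g₂),
      W ((s₁ ≫ v₁) ≫ u) ∧
        (α_ s₁ g₁ wm).hom ≫ s₁ ◁ α₁.hom ≫ (α_ s₁ v₁ f).inv ≫ β.hom ▷ f =
          γ.hom ▷ wm ≫ (α_ s₂ g₂ wm).hom ≫ s₂ ◁ α₂.hom ≫ (α_ s₂ v₂ f).inv := by
  obtain ⟨P0, t₁0, t₂0, hWt₂0, ⟨σ0⟩⟩ := h3 (v₁ ≫ u) (v₂ ≫ u) hu₁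
  obtain ⟨P, p, hWpZ⟩ := WClass.chain2 h2 h5 t₂0 (v₂ ≫ u) hWt₂0 hu₂
  set t₁ : P ⟶ D₁ := p ≫ t₁0 with ht₁
  set t₂ : P ⟶ D₂ := p ≫ t₂0 with ht₂
  have ηiso : (t₁ ≫ v₁) ≫ u ≅ (t₂ ≫ v₂) ≫ u :=
    α_ t₁ v₁ u ≪≫ α_ p t₁0 (v₁ ≫ u) ≪≫ whiskerLeftIso p σ0 ≪≫
      (α_ p t₂0 (v₂ ≫ u)).symm ≪≫ (α_ t₂ v₂ u).symm
  obtain ⟨Q, q0, hWq0, βhat0, -⟩ :=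
    WClass.isoLift h2 h3 h4 h5 (t₁ ≫ v₁) (t₂ ≫ v₂) u hu ηiso
  obtain ⟨Q₁, p₂', hWqZ⟩ := WClass.chain2 h2 h5 q0 (t₂ ≫ (v₂ ≫ u)) hWq0 hWpZ
  set q : Q₁ ⟶ P := p₂' ≫ q0 with hqdef
  set s₁'' : Q₁ ⟶ D₁ := q ≫ t₁ with hs₁''
  set s₂'' : Q₁ ⟶ D₂ := q ≫ t₂ with hs₂''
  have βmid : s₁'' ≫ v₁ ≅ s₂'' ≫ v₂ :=
    α_ q t₁ v₁ ≪≫ α_ p₂' q0 (t₁ ≫ v₁) ≪≫ whiskerLeftIso p₂' βhat0 ≪≫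
      (α_ p₂' q0 (t₂ ≫ v₂)).symm ≪≫ (α_ q t₂ v₂).symm
  obtain ⟨R, r, hWr, γhat, hγhat⟩ := WClass.isoLift h2 h3 h4 h5 (s₁'' ≫ g₁) (s₂'' ≫ g₂) wm hwm
    (α_ s₁'' g₁ wm ≪≫ whiskerLeftIso s₁'' α₁ ≪≫ (α_ s₁'' v₁ f).symm ≪≫ whiskerRightIso βmid f ≪≫
      α_ s₂'' v₂ f ≪≫ whiskerLeftIso s₂'' α₂.symm ≪≫ (α_ s₂'' g₂ wm).symm)
  obtain ⟨S, p₃, hWfin⟩ := WClass.chain2 h2 h5 r (q ≫ (t₂ ≫ (v₂ ≫ u))) hWr hWqZ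
  set m : S ⟶ Q₁ := p₃ ≫ r with hm
  have hγm := WClass.lift_whisker hγhat p₃
  set γm : m ≫ (s₁'' ≫ g₁) ⟶ m ≫ (s₂'' ≫ g₂) :=
    (α_ p₃ r (s₁'' ≫ g₁)).hom ≫ p₃ ◁ γhat.hom ≫ (α_ p₃ r (s₂'' ≫ g₂)).inv with hγmdef
  have hγ : γm ▷ wm = (α_ m (s₁'' ≫ g₁) wm).hom ≫
       m ◁ ((α_ s₁'' g₁ wm).hom ≫ s₁'' ◁ α₁.hom ≫ (α_ s₁'' v₁ f).inv ≫ βmid.hom ▷ f ≫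
            (α_ s₂'' v₂ f).hom ≫ s₂'' ◁ α₂.inv ≫ (α_ s₂'' g₂ wm).inv) ≫
       (α_ m (s₂'' ≫ g₂) wm).inv := by
    have h := hγm
    simp only [WClass.IsLift, Iso.trans_hom, whiskerLeftIso_hom, whiskerRightIso_hom,
      Iso.symm_hom, Category.assoc] at h
    exact h
  have hγmiso : IsIso γm := by rw [hγmdef]; infer_instance
  refine ⟨S, m ≫ s₁'', m ≫ s₂'',
    α_ m s₁'' v₁ ≪≫ whiskerLeftIso m βmid ≪≫ (α_ m s₂'' v₂).symm,
    asIso ((α_ m s₁'' g₁).hom ≫ γm ≫ (α_ m s₂'' g₂).inv), ?_, ?_⟩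
  · have h2iso : ((m ≫ s₂'') ≫ v₂) ≫ u ≅ m ≫ (q ≫ (t₂ ≫ (v₂ ≫ u))) :=
      whiskerRightIso (α_ m s₂'' v₂) u ≪≫ α_ m (s₂'' ≫ v₂) u ≪≫
        whiskerLeftIso m (whiskerRightIso (α_ q t₂ v₂) u ≪≫ α_ q (t₂ ≫ v₂) u ≪≫
          whiskerLeftIso q (α_ t₂ v₂ u))
    have hW2 : W (((m ≫ s₂'') ≫ v₂) ≫ u) := h5 _ _ hWfin ⟨h2iso⟩
    exact h5 _ _ hW2 ⟨whiskerRightIso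
      (α_ m s₁'' v₁ ≪≫ whiskerLeftIso m βmid ≪≫ (α_ m s₂'' v₂).symm) u⟩
  · simp only [Iso.trans_hom, whiskerLeftIso_hom, Iso.symm_hom, asIso_hom]
    exact assemble m s₁'' s₂'' g₁ v₁ g₂ v₂ wm f α₁ α₂ βmid γm hγ
end

section
/- Let B be a bicategory with a class V of 1-morphisms satisfying [WB1]–[WB5], and let W ⊆ V be weakly initial in V (for each v ∈ V there exists u with v ∘ u ∈ W) and satisfy [WB1] and [WB5]. Then W also satisfies conditions [WB2], [WB3], and [WB4]. -/
open CategoryTheory Bicategory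

universe w v u

theorem statement5 {B : Type u} [Bicategory.{w, v} B] (V W : WClass B)
    (hV1 : V.WB1) (hV2 : V.WB2) (hV3 : V.WB3) (hV4 : V.WB4) (hV5 : V.WB5)
    (hsub : ∀ ⦃a b : B⦄ (f : a ⟶ b), W f → V f)
    (hwi : ∀ ⦃a b : B⦄ (f : a ⟶ b), V f → ∃ (c : B) (u : c ⟶ a), W (u ≫ f))
    (hW1 : W.WB1) (hW5 : W.WB5) :
    W.WB2 ∧ W.WB3 ∧ W.WB4 := by
  refine ⟨?_, ?_, ?_, ?_⟩
  · -- WB2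
    intro a b c vm wm hv hw
    obtain ⟨a', u, hu⟩ := hV2 vm wm (hsub _ hv) (hsub _ hw)
    obtain ⟨a'', u', hu'⟩ := hwi _ hu
    exact ⟨a'', u' ≫ u, hW5 _ _ hu' ⟨(α_ u' u (vm ≫ wm))⟩⟩
  · -- WB3
    intro a b c wm f hw
    obtain ⟨d, h, vm, hv, ⟨φ⟩⟩ := hV3 wm f (hsub _ hw)
    obtain ⟨d', u, hu⟩ := hwi _ hv
    exact ⟨d', u ≫ h, u ≫ vm, hu,
      ⟨α_ u h wm ≪≫ whiskerLeftIso u φ ≪≫ (α_ u vm f).symm⟩⟩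
  · -- WB4.1
    intro a b c f g wm hw η
    obtain ⟨a', u, hu, β, hβ⟩ := (hV4.1) f g wm (hsub _ hw) η
    obtain ⟨a'', u', hu'⟩ := hwi _ hu
    refine ⟨a'', u' ≫ u, hu', (α_ u' u f).hom ≫ u' ◁ β ≫ (α_ u' u g).inv, ?_⟩
    unfold WClass.IsLift at hβ ⊢
    rw [comp_whiskerRight, comp_whiskerRight, whisker_assoc, hβ]
    simp
  · -- WB4.2
    intro a b c f g wm hw η a₁ u₁ β₁ hu₁ hβ₁ a₂ u₂ β₂ hu₂ hβ₂
    obtain ⟨d, s, t, hs, ht, e, hε⟩ :=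
      (hV4.2) f g wm (hsub _ hw) η u₁ β₁ (hsub _ hu₁) hβ₁ u₂ β₂ (hsub _ hu₂) hβ₂
    obtain ⟨d', r, hr⟩ := hwi _ hs
    refine ⟨d', r ≫ s, r ≫ t, hW5 _ _ hr ⟨α_ r s u₁⟩,
      hW5 _ _ hr ⟨α_ r t u₂ ≪≫ whiskerLeftIso r e.symm⟩,
      α_ r s u₁ ≪≫ whiskerLeftIso r e ≪≫ (α_ r t u₂).symm, ?_⟩
    have := congrArg (fun x => r ◁ x) hε
    simp only [Bicategory.whiskerLeft_comp] at this
    simp only [Iso.trans_hom, Iso.symm_hom, whiskerLeftIso_hom, comp_whiskerRight,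
      Category.assoc, whisker_assoc]
    simp only [comp_whiskerLeft, Category.assoc] at this ⊢
    rw [← pentagon_assoc, ← pentagon_assoc]
    simp only [Category.assoc, inv_hom_whiskerRight_assoc, hom_inv_whiskerRight_assoc,
      Iso.inv_hom_id_assoc, Iso.hom_inv_id_assoc, pentagon_inv_assoc, ← pentagon_inv]
    have key : (α_ r s (u₁ ≫ g)).inv ≫ (α_ (r ≫ s) u₁ g).inv ≫
        (α_ r s u₁).hom ▷ g ≫ (α_ r (s ≫ u₁) g).hom = r ◁ (α_ s u₁ g).inv := by
      rw [← cancel_mono (r ◁ (α_ s u₁ g).hom)]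
      simp [pentagon]
    rw [reassoc_of% key, reassoc_of% this]
end
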